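/- arXiv:2602.19893 — 5 statements merged into one kernel-verified Lean document; each statement's English description precedes it below -/
import Mathlib

section
/- For every integer k ≥ 1, the first-order coefficient of the equal-truncation generalized Hessian operator vanishes: 2 ∑_{m=1}^k (-1)^{2-m} (∑_{j=1}^k 1/j) C(k,m) + ∑_{l=1}^k ∑_{m=1}^k (-1)^{2-l-m} C(k,l) C(k,m) (l+m)/(l·m) = 0. -/
open Finset

lemma zp (n : ℕ) : (-1 : ℚ) ^ ((2 : ℤ) - (n : ℤ)) = (-1) ^ n := by
  rw [zpow_sub₀ (by norm_num : (-1:ℚ) ≠ 0), zpow_natCast]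
  norm_num
  rw [← inv_pow, inv_neg, inv_one]

lemma altsum (k : ℕ) (hk : 1 ≤ k) :
    ∑ m ∈ Icc 1 k, (-1 : ℚ) ^ m * (k.choose m : ℚ) = -1 := by
  have hins : Finset.range (k+1) = insert 0 (Icc 1 k) := by
    ext x; simp [Finset.mem_range, Finset.mem_Icc, Nat.lt_succ_iff]; omega
  have h0 : ∑ m ∈ range (k+1), (-1 : ℚ) ^ m * (k.choose m : ℚ) = 0 := by
    have h := Int.alternating_sum_range_choose (n := k)
    rw [if_neg (by omega : k ≠ 0)] at h
    have h2 : ((∑ i ∈ range (k+1), (-1 : ℤ)^i * (k.choose i : ℤ) : ℤ) : ℚ) = 0 := by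
      rw [h]; norm_num
    rw [← h2]; push_cast; ring
  rw [hins, Finset.sum_insert (by simp)] at h0
  simp at h0
  linarith

lemma altharm (k : ℕ) (hk : 1 ≤ k) :
    ∑ m ∈ Icc 1 k, (-1 : ℚ) ^ m * (k.choose m : ℚ) / m
      = - ∑ j ∈ Icc 1 k, (1 : ℚ) / j := by
  induction k with
  | zero => omega
  | succ n ih =>
    rcases Nat.eq_or_lt_of_le hk with h | h
    · rw [← h]; norm_num
    · have hn : 1 ≤ n := by omega
      have hins : Icc 1 (n+1) = insert (n+1) (Icc 1 n) := by
        ext x; simp [Finset.mem_Icc, Finset.mem_insert]; omega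
      have step : ∑ m ∈ Icc 1 (n+1), (-1 : ℚ) ^ m * ((n+1).choose m : ℚ) / m
          = (∑ m ∈ Icc 1 n, (-1 : ℚ) ^ m * (n.choose m : ℚ) / m)
            + (1/((n:ℚ)+1)) * ∑ m ∈ Icc 1 (n+1), (-1 : ℚ) ^ m * ((n+1).choose m : ℚ) := by
        have key : ∀ m ∈ Icc 1 n, (-1:ℚ)^m * ((n+1).choose m : ℚ) / m
            = (-1:ℚ)^m * (n.choose m:ℚ)/m + 1/((n:ℚ)+1) * ((-1:ℚ)^m * ((n+1).choose m : ℚ)) := by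
          intro m hm
          simp only [Finset.mem_Icc] at hm
          have hm1 : 1 ≤ m := hm.1
          obtain ⟨p, rfl⟩ : ∃ p, m = p + 1 := ⟨m - 1, by omega⟩
          have hpascal : ((n+1).choose (p+1) : ℚ) = (n.choose (p+1) : ℚ) + (n.choose p : ℚ) := by
            rw [Nat.choose_succ_succ']
            push_cast; ring
          have hid : ((n:ℚ)+1) * (n.choose p : ℚ) = ((p:ℚ)+1) * (((n+1).choose (p+1)) : ℚ) := by
            have h3 := Nat.add_one_mul_choose_eq n p
            have h4 : ((Nat.succ n * n.choose p : ℕ) : ℚ) = (((n+1).choose (p+1) * (p+1) : ℕ) : ℚ) := by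
              rw [h3]
            push_cast at h4
            linarith
          have hm0 : ((p:ℚ)+1) ≠ 0 := by positivity
          have hn1 : ((n:ℚ)+1) ≠ 0 := by positivity
          rw [hpascal]
          push_cast
          field_simp
          linear_combination hid + ((p:ℚ)+1) * hpascal
        rw [hins, Finset.sum_insert (by simp), Finset.sum_insert (by simp), mul_add,
          Finset.sum_congr rfl key, Finset.sum_add_distrib, ← Finset.mul_sum]
        have hlast : (-1:ℚ)^(n+1) * ((n+1).choose (n+1) : ℚ) / ((n+1:ℕ):ℚ)
            = 1/((n:ℚ)+1) * ((-1:ℚ)^(n+1) * ((n+1).choose (n+1):ℚ)) := by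
          rw [Nat.choose_self]; push_cast; ring
        push_cast
        push_cast at hlast
        rw [hlast]; ring
      rw [step, ih hn, altsum (n+1) (by omega), hins, Finset.sum_insert (by simp)]
      push_cast
      ring

theorem stmt4 (k : ℕ) (hk : 1 ≤ k) :
    2 * ∑ m ∈ Finset.Icc 1 k, (-1 : ℚ) ^ ((2 : ℤ) - (m : ℤ))
        * (∑ j ∈ Finset.Icc 1 k, (1 : ℚ) / (j : ℚ)) * (k.choose m : ℚ)
      + ∑ l ∈ Finset.Icc 1 k, ∑ m ∈ Finset.Icc 1 k,
          (-1 : ℚ) ^ ((2 : ℤ) - (l : ℤ) - (m : ℤ))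
            * (k.choose l : ℚ) * (k.choose m : ℚ)
            * ((l : ℚ) + (m : ℚ)) / ((l : ℚ) * (m : ℚ)) = 0 := by
  set H : ℚ := ∑ j ∈ Finset.Icc 1 k, (1 : ℚ) / (j : ℚ) with hH
  set A : ℚ := ∑ m ∈ Icc 1 k, (-1 : ℚ) ^ m * (k.choose m : ℚ) with hA
  set B : ℚ := ∑ m ∈ Icc 1 k, (-1 : ℚ) ^ m * (k.choose m : ℚ) / m with hB
  have h1 : ∑ m ∈ Finset.Icc 1 k, (-1 : ℚ) ^ ((2 : ℤ) - (m : ℤ)) * H * (k.choose m : ℚ)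
      = H * A := by
    rw [hA, Finset.mul_sum]
    apply Finset.sum_congr rfl
    intro m _
    rw [zp]; ring
  have h2 : ∑ l ∈ Finset.Icc 1 k, ∑ m ∈ Finset.Icc 1 k,
        (-1 : ℚ) ^ ((2 : ℤ) - (l : ℤ) - (m : ℤ))
          * (k.choose l : ℚ) * (k.choose m : ℚ)
          * ((l : ℚ) + (m : ℚ)) / ((l : ℚ) * (m : ℚ))
      = B * A + A * B := by
    have expand : ∀ l ∈ Icc 1 k, ∀ m ∈ Icc 1 k,
        (-1 : ℚ) ^ ((2 : ℤ) - (l : ℤ) - (m : ℤ))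
          * (k.choose l : ℚ) * (k.choose m : ℚ)
          * ((l : ℚ) + (m : ℚ)) / ((l : ℚ) * (m : ℚ))
        = ((-1:ℚ)^l * (k.choose l : ℚ) / l) * ((-1:ℚ)^m * (k.choose m : ℚ))
          + ((-1:ℚ)^l * (k.choose l : ℚ)) * ((-1:ℚ)^m * (k.choose m : ℚ) / m) := by
      intro l hl m hm
      simp only [Finset.mem_Icc] at hl hm
      have hl0 : (l : ℚ) ≠ 0 := Nat.cast_ne_zero.mpr (by omega)
      have hm0 : (m : ℚ) ≠ 0 := Nat.cast_ne_zero.mpr (by omega)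
      have hz : (-1 : ℚ) ^ ((2 : ℤ) - (l : ℤ) - (m : ℤ)) = (-1)^l * (-1)^m := by
        rw [show (2 : ℤ) - (l : ℤ) - (m : ℤ) = (2:ℤ) - ((l + m : ℕ) : ℤ) by push_cast; ring,
          zp, pow_add]
      rw [hz]
      field_simp
      ring
    rw [Finset.sum_congr rfl (fun l hl => Finset.sum_congr rfl (fun m hm => expand l hl m hm))]
    simp only [Finset.sum_add_distrib, ← Finset.sum_mul, ← Finset.mul_sum]
    rw [hA, hB]
  rw [h1, h2, hA, hB, altsum k hk, altharm k hk, ← hH]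
  ring
end

section
/- For integers k ≥ 1 and q with 3 ≤ q ≤ k, the q-th order coefficient of the equal-truncation generalized Hessian operator vanishes: 2 ∑_{m=1}^k (-1)^{2-m} (∑_{j=1}^k 1/j) C(k,m) m^{q-1} + ∑_{l=1}^k ∑_{m=1}^k (-1)^{2-l-m} C(k,l) C(k,m) (l+m)^q/(l·m) = 0. -/
open Finset

lemma altA : ∀ (p k : ℕ), p < k → ∑ m ∈ range (k+1), (-1:ℚ)^m * (k.choose m) * (m:ℚ)^p = 0 := by
  intro p
  induction p using Nat.strong_induction_on with
  | _ p IH =>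
    intro k hk
    match p with
    | 0 =>
      have h := Int.alternating_sum_range_choose (n := k)
      rw [if_neg (by omega)] at h
      have := congrArg (fun z : ℤ => (z : ℚ)) h
      push_cast at this
      simpa [pow_zero] using this
    | p + 1 =>
      obtain ⟨K, rfl⟩ : ∃ K, k = K + 1 := ⟨k - 1, by omega⟩
      rw [Finset.sum_range_succ']
      simp only [Nat.cast_zero, zero_pow (by omega : p + 1 ≠ 0), mul_zero, add_zero]
      have key : ∀ i : ℕ, (-1:ℚ)^(i+1) * ((K+1).choose (i+1)) * ((i:ℚ)+1)^(p+1)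
          = -((K:ℚ)+1) * ((-1:ℚ)^i * (K.choose i) * ((i:ℚ)+1)^p) := by
        intro i
        have h := Nat.add_one_mul_choose_eq K i
        have h2 : ((K+1 : ℕ) : ℚ) * (K.choose i : ℚ) = ((K+1).choose (i+1) : ℚ) * ((i:ℚ)+1) := by
          exact_mod_cast congrArg (fun n : ℕ => (n : ℚ)) h
        push_cast at h2 ⊢
        linear_combination ((-1:ℚ)^i * ((i:ℚ)+1)^p) * h2
      have inner : ∑ i ∈ range (K+1), (-1:ℚ)^i * (K.choose i) * ((i:ℚ)+1)^p = 0 := by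
        have expand : ∀ i : ℕ, ((i:ℚ)+1)^p = ∑ j ∈ range (p+1), (p.choose j : ℚ) * (i:ℚ)^j := by
          intro i
          rw [add_pow]
          exact sum_congr rfl fun j _ => by ring
        calc ∑ i ∈ range (K+1), (-1:ℚ)^i * (K.choose i) * ((i:ℚ)+1)^p
            = ∑ i ∈ range (K+1), ∑ j ∈ range (p+1),
                (p.choose j : ℚ) * ((-1:ℚ)^i * (K.choose i) * (i:ℚ)^j) := by
              refine sum_congr rfl fun i _ => ?_
              rw [expand, mul_sum]
              exact sum_congr rfl fun j _ => by ring
          _ = ∑ j ∈ range (p+1), (p.choose j : ℚ) *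
                ∑ i ∈ range (K+1), (-1:ℚ)^i * (K.choose i) * (i:ℚ)^j := by
              rw [sum_comm]
              exact sum_congr rfl fun j _ => by rw [mul_sum]
          _ = 0 := by
              refine sum_eq_zero fun j hj => ?_
              have hjp := mem_range.mp hj
              rw [IH j hjp K (by omega), mul_zero]
      calc ∑ i ∈ range (K+1), (-1:ℚ)^(i+1) * (((K+1).choose (i+1) : ℕ) : ℚ) * (((i+1 : ℕ)):ℚ)^(p+1)
          = ∑ i ∈ range (K+1), -((K:ℚ)+1) * ((-1:ℚ)^i * (K.choose i) * ((i:ℚ)+1)^p) := by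
            refine sum_congr rfl fun i _ => ?_
            push_cast
            exact key i
        _ = -((K:ℚ)+1) * ∑ i ∈ range (K+1), (-1:ℚ)^i * (K.choose i) * ((i:ℚ)+1)^p := by
            rw [mul_sum]
        _ = 0 := by rw [inner, mul_zero]

lemma altIcc (p k : ℕ) (hp : 1 ≤ p) (hpk : p < k) :
    ∑ m ∈ Icc 1 k, (-1:ℚ)^m * (k.choose m) * (m:ℚ)^p = 0 := by
  have hE : Finset.Icc 1 k = (Finset.range (k+1)).erase 0 := by
    ext m
    simp [Nat.lt_succ_iff, Nat.one_le_iff_ne_zero, and_comm]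
  have h := altA p k hpk
  rw [← Finset.sum_erase_add _ _ (Finset.mem_range.mpr (Nat.succ_pos k))] at h
  rw [hE]
  simpa [zero_pow (by omega : p ≠ 0)] using h

lemma Pzero (j k : ℕ) (h2 : 2 ≤ j) (hjk : j ≤ k) :
    ∑ l ∈ Icc 1 k, (-1:ℚ)^l * (k.choose l) * (l:ℚ)^j / l = 0 := by
  rw [← altIcc (j-1) k (by omega) (by omega)]
  refine sum_congr rfl fun l hl => ?_
  have hl1 : (1:ℕ) ≤ l := (mem_Icc.mp hl).1
  have hlQ : (l:ℚ) ≠ 0 := Nat.cast_ne_zero.mpr (by omega)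
  rw [show j = (j-1)+1 by omega, pow_succ]
  field_simp
  ring_nf
  rw [show 1 + (j - 1) - 1 = j - 1 by omega]

theorem stmt6 (k q : ℕ) (hq : 3 ≤ q) (hqk : q ≤ k) :
    2 * ∑ m ∈ Finset.Icc 1 k, (-1 : ℚ) ^ ((2 : ℤ) - (m : ℤ))
        * (∑ j ∈ Finset.Icc 1 k, (1 : ℚ) / (j : ℚ)) * (k.choose m : ℚ) * (m : ℚ) ^ (q - 1)
      + ∑ l ∈ Finset.Icc 1 k, ∑ m ∈ Finset.Icc 1 k,
          (-1 : ℚ) ^ ((2 : ℤ) - (l : ℤ) - (m : ℤ))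
            * (k.choose l : ℚ) * (k.choose m : ℚ)
            * ((l : ℚ) + (m : ℚ)) ^ q / ((l : ℚ) * (m : ℚ)) = 0 := by
  have hne : (-1 : ℚ) ≠ 0 := by norm_num
  have hinv : ∀ a : ℕ, ((-1:ℚ)^a)⁻¹ = (-1:ℚ)^a := by
    intro a; rw [← inv_pow]; norm_num
  have hsgn1 : ∀ a : ℕ, (-1:ℚ)^((2:ℤ)-(a:ℤ)) = (-1:ℚ)^a := by
    intro a
    rw [zpow_sub₀ hne, zpow_natCast]
    norm_num [div_eq_mul_inv, hinv]
  have hsgn2 : ∀ a b : ℕ, (-1:ℚ)^((2:ℤ)-(a:ℤ)-(b:ℤ)) = (-1:ℚ)^a * (-1:ℚ)^b := by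
    intro a b
    rw [zpow_sub₀ hne, zpow_sub₀ hne, zpow_natCast, zpow_natCast]
    norm_num [div_eq_mul_inv, hinv]
  set H : ℚ := ∑ j ∈ Finset.Icc 1 k, (1 : ℚ) / (j : ℚ) with hH
  have h1 : ∑ m ∈ Finset.Icc 1 k, (-1 : ℚ) ^ ((2 : ℤ) - (m : ℤ))
      * H * (k.choose m : ℚ) * (m : ℚ) ^ (q - 1) = 0 := by
    calc ∑ m ∈ Finset.Icc 1 k, (-1 : ℚ) ^ ((2 : ℤ) - (m : ℤ))
          * H * (k.choose m : ℚ) * (m : ℚ) ^ (q - 1)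
        = ∑ m ∈ Finset.Icc 1 k, H * ((-1:ℚ)^m * (k.choose m : ℚ) * (m:ℚ)^(q-1)) := by
          refine sum_congr rfl fun m _ => ?_
          rw [hsgn1]; ring
      _ = H * ∑ m ∈ Finset.Icc 1 k, (-1:ℚ)^m * (k.choose m : ℚ) * (m:ℚ)^(q-1) := by
          rw [mul_sum]
      _ = 0 := by rw [altIcc (q-1) k (by omega) (by omega), mul_zero]
  set f : ℕ → ℕ → ℚ := fun j l => (-1:ℚ)^l * (k.choose l : ℚ) * (l:ℚ)^j / l with hf
  have h2 : ∑ l ∈ Finset.Icc 1 k, ∑ m ∈ Finset.Icc 1 k,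
      (-1 : ℚ) ^ ((2 : ℤ) - (l : ℤ) - (m : ℤ))
        * (k.choose l : ℚ) * (k.choose m : ℚ)
        * ((l : ℚ) + (m : ℚ)) ^ q / ((l : ℚ) * (m : ℚ)) = 0 := by
    have hterm : ∀ l ∈ Finset.Icc 1 k, ∀ m ∈ Finset.Icc 1 k,
        (-1 : ℚ) ^ ((2 : ℤ) - (l : ℤ) - (m : ℤ))
          * (k.choose l : ℚ) * (k.choose m : ℚ)
          * ((l : ℚ) + (m : ℚ)) ^ q / ((l : ℚ) * (m : ℚ))
        = ∑ j ∈ range (q+1), (q.choose j : ℚ) * f j l * f (q-j) m := by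
      intro l hl m hm
      have hlQ : (l:ℚ) ≠ 0 := Nat.cast_ne_zero.mpr (by have := (mem_Icc.mp hl).1; omega)
      have hmQ : (m:ℚ) ≠ 0 := Nat.cast_ne_zero.mpr (by have := (mem_Icc.mp hm).1; omega)
      rw [hsgn2, add_pow, mul_sum, sum_div]
      refine sum_congr rfl fun j hj => ?_
      simp only [hf]
      field_simp
    calc ∑ l ∈ Finset.Icc 1 k, ∑ m ∈ Finset.Icc 1 k,
          (-1 : ℚ) ^ ((2 : ℤ) - (l : ℤ) - (m : ℤ))
            * (k.choose l : ℚ) * (k.choose m : ℚ)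
            * ((l : ℚ) + (m : ℚ)) ^ q / ((l : ℚ) * (m : ℚ))
        = ∑ l ∈ Finset.Icc 1 k, ∑ m ∈ Finset.Icc 1 k,
            ∑ j ∈ range (q+1), (q.choose j : ℚ) * f j l * f (q-j) m := by
          refine sum_congr rfl fun l hl => sum_congr rfl fun m hm => hterm l hl m hm
      _ = ∑ l ∈ Finset.Icc 1 k, ∑ j ∈ range (q+1), ∑ m ∈ Finset.Icc 1 k,
            (q.choose j : ℚ) * f j l * f (q-j) m := by
          exact sum_congr rfl fun l _ => sum_comm
      _ = ∑ j ∈ range (q+1), ∑ l ∈ Finset.Icc 1 k, ∑ m ∈ Finset.Icc 1 k,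
            (q.choose j : ℚ) * f j l * f (q-j) m := sum_comm
      _ = ∑ j ∈ range (q+1), (q.choose j : ℚ) * (∑ l ∈ Finset.Icc 1 k, f j l)
            * (∑ m ∈ Finset.Icc 1 k, f (q-j) m) := by
          refine sum_congr rfl fun j _ => ?_
          rw [mul_assoc, sum_mul_sum, mul_sum]
          refine sum_congr rfl fun l _ => ?_
          rw [mul_sum]
          exact sum_congr rfl fun m _ => by ring
      _ = 0 := by
          refine sum_eq_zero fun j hj => ?_
          have hjq : j ≤ q := by have := mem_range.mp hj; omega
          rcases le_or_gt 2 j with h | h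
          · rw [show (∑ l ∈ Finset.Icc 1 k, f j l) = 0 from Pzero j k h (by omega)]
            ring
          · rw [show (∑ m ∈ Finset.Icc 1 k, f (q-j) m) = 0 from Pzero (q-j) k (by omega) (by omega)]
            ring
  rw [h1, h2]
  ring
end

section
/- For every integer k ≥ 2, the second-order Taylor coefficient of the unequal-truncation Hessian operator D^k ∘ D^1 equals 1: (1/2)[−∑_{j=1}^k 1/j + ∑_{l=1}^k (-1)^{1-l} (C(k,l)/l)(l+1)^2 − ∑_{l=1}^k (-1)^{1-l} (C(k,l)/l) l^2] = 1. -/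
lemma sign_eq (l : ℕ) : (-1:ℚ)^((1:ℤ)-(l:ℤ)) = (-1:ℚ)^(l+1) := by
  have h : (1:ℤ) - l = (l+1) - 2*l := by ring
  rw [h, zpow_sub₀ (by norm_num : (-1:ℚ) ≠ 0), zpow_mul]
  rw [show (l:ℤ)+1 = ((l+1:ℕ):ℤ) by push_cast; ring, zpow_natCast]
  norm_num

lemma alt_sum (k : ℕ) (hk : 1 ≤ k) :
    ∑ l ∈ Finset.Icc 1 k, (-1:ℚ)^(l+1) * (k.choose l : ℚ) = 1 := by
  have h0 := Int.alternating_sum_range_choose_of_ne (by omega : k ≠ 0)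
  have h0' : ∑ i ∈ Finset.range (k+1), (-1:ℚ)^i * (k.choose i : ℚ) = 0 := by
    exact_mod_cast congrArg (fun z : ℤ => (z : ℚ)) h0
  rw [Finset.sum_range_succ'] at h0'
  simp only [pow_zero, one_mul, Nat.choose_zero_right, Nat.cast_one] at h0'
  rw [show Finset.Icc 1 k = Finset.Ico 1 (k+1) from (Finset.Ico_add_one_right_eq_Icc 1 k).symm,
    Finset.sum_Ico_eq_sum_range]
  simp only [Nat.add_sub_cancel]
  have : ∀ i ∈ Finset.range k, (-1:ℚ)^(1+i+1) * (k.choose (1+i) : ℚ)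
      = -((-1:ℚ)^(i+1) * (k.choose (i+1) : ℚ)) := by
    intro i _
    rw [add_comm 1 i]
    ring
  rw [Finset.sum_congr rfl this, Finset.sum_neg_distrib]
  linarith

lemma harm_sum (k : ℕ) (hk : 1 ≤ k) :
    ∑ l ∈ Finset.Icc 1 k, (-1:ℚ)^(l+1) * (k.choose l : ℚ) / l
      = ∑ j ∈ Finset.Icc 1 k, (1:ℚ) / j := by
  induction k, hk using Nat.le_induction with
  | base => norm_num
  | succ k hk ih =>
    have split : ∀ l ∈ Finset.Icc 1 (k+1),
        (-1:ℚ)^(l+1) * ((k+1).choose l : ℚ) / l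
          = (-1:ℚ)^(l+1) * (k.choose l : ℚ) / l
            + ((-1:ℚ)^(l+1) * ((k+1).choose l : ℚ)) / (k+1) := by
      intro l hl
      obtain ⟨m, rfl⟩ : ∃ m, l = m + 1 := by
        rcases Finset.mem_Icc.mp hl with ⟨h1, _⟩
        exact ⟨l - 1, by omega⟩
      have hch : (k+1).choose (m+1) = k.choose m + k.choose (m+1) :=
        Nat.choose_succ_succ k m
      have hmul : (k+1) * k.choose m = (k+1).choose (m+1) * (m+1) := by
        simpa [Nat.succ_eq_add_one] using Nat.add_one_mul_choose_eq k m
      have hmulQ : ((k:ℚ)+1) * (k.choose m : ℚ)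
          = ((k+1).choose (m+1) : ℚ) * ((m:ℚ)+1) := by exact_mod_cast hmul
      have hchQ : (((k+1).choose (m+1) : ℚ)) = (k.choose m : ℚ) + (k.choose (m+1) : ℚ) := by
        exact_mod_cast hch
      have hm1 : ((m:ℚ)+1) ≠ 0 := by positivity
      have hk1 : ((k:ℚ)+1) ≠ 0 := by positivity
      push_cast
      rw [div_add_div _ _ hm1 hk1, div_eq_div_iff hm1 (mul_ne_zero hm1 hk1)]
      linear_combination ((m:ℚ)+1) * (-1:ℚ)^(m+1+1) * (((k:ℚ)+1) * hchQ + hmulQ)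
    rw [Finset.sum_congr rfl split, Finset.sum_add_distrib]
    rw [← Finset.sum_div, alt_sum (k+1) (by omega)]
    rw [Finset.sum_Icc_succ_top (by omega : 1 ≤ k+1), Nat.choose_succ_self, Nat.cast_zero]
    rw [Finset.sum_Icc_succ_top (by omega : 1 ≤ k+1) (fun j => (1:ℚ)/j)]
    rw [ih]
    push_cast
    ring

theorem stmt9 (k : ℕ) (hk : 2 ≤ k) :
    (1 / 2 : ℚ) *
      (-(∑ j ∈ Finset.Icc 1 k, (1 : ℚ) / (j : ℚ))
        + ∑ l ∈ Finset.Icc 1 k, (-1 : ℚ) ^ ((1 : ℤ) - (l : ℤ))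
            * ((k.choose l : ℚ) / (l : ℚ)) * ((l : ℚ) + 1) ^ 2
        - ∑ l ∈ Finset.Icc 1 k, (-1 : ℚ) ^ ((1 : ℤ) - (l : ℤ))
            * ((k.choose l : ℚ) / (l : ℚ)) * (l : ℚ) ^ 2) = 1 := by
  have h2 : ∑ l ∈ Finset.Icc 1 k, (-1 : ℚ) ^ ((1 : ℤ) - (l : ℤ))
            * ((k.choose l : ℚ) / (l : ℚ)) * ((l : ℚ) + 1) ^ 2
        - ∑ l ∈ Finset.Icc 1 k, (-1 : ℚ) ^ ((1 : ℤ) - (l : ℤ))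
            * ((k.choose l : ℚ) / (l : ℚ)) * (l : ℚ) ^ 2
      = 2 + ∑ j ∈ Finset.Icc 1 k, (1:ℚ) / j := by
    rw [← Finset.sum_sub_distrib]
    have step : ∀ l ∈ Finset.Icc 1 k,
        (-1 : ℚ) ^ ((1 : ℤ) - (l : ℤ)) * ((k.choose l : ℚ) / (l : ℚ)) * ((l : ℚ) + 1) ^ 2
          - (-1 : ℚ) ^ ((1 : ℤ) - (l : ℤ)) * ((k.choose l : ℚ) / (l : ℚ)) * (l : ℚ) ^ 2
        = 2 * ((-1:ℚ)^(l+1) * (k.choose l : ℚ))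
          + (-1:ℚ)^(l+1) * (k.choose l : ℚ) / l := by
      intro l hl
      have hl1 : 1 ≤ l := (Finset.mem_Icc.mp hl).1
      have hl0 : (l:ℚ) ≠ 0 := Nat.cast_ne_zero.mpr (by omega)
      rw [sign_eq]
      field_simp
      ring
    rw [Finset.sum_congr rfl step, Finset.sum_add_distrib, ← Finset.mul_sum,
      alt_sum k (by omega), harm_sum k (by omega)]
    ring
  linarith [h2]
end

section
/- For integers k₁, k₂ ≥ 1, the first-order coefficient of the unequal-truncation Hessian operator D^{k₂} ∘ D^{k₁} vanishes: c_0^{k₂} ∑_{m=1}^{k₁} (-1)^{2-m} C(k₁,m) + c_0^{k₁} ∑_{l=1}^{k₂} (-1)^{2-l} C(k₂,l) + ∑_{l=1}^{k₂} ∑_{m=1}^{k₁} (-1)^{2-l-m} C(k₂,l) C(k₁,m) (1/l + 1/m) = 0, where c_0^k = ∑_{j=1}^k 1/j. -/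
open Finset

lemma altsum_div (k : ℕ) (hk : 1 ≤ k) :
    ∑ m ∈ Icc 1 k, (-1 : ℚ) ^ m * (k.choose m : ℚ) / m
      = -∑ j ∈ Icc 1 k, (1 : ℚ) / j := by
  induction k, hk using Nat.le_induction with
  | base => norm_num
  | succ k hk ih =>
    have pascal : ∀ m ∈ Icc 1 (k+1),
        (-1 : ℚ) ^ m * ((k+1).choose m : ℚ) / m
          = (-1 : ℚ) ^ m * (k.choose m : ℚ) / m
            + (-1 : ℚ) ^ m * ((k+1).choose m : ℚ) / ((k:ℚ)+1) := by
      intro m hm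
      simp only [mem_Icc] at hm
      obtain ⟨m, rfl⟩ : ∃ m', m = m' + 1 := ⟨m - 1, by omega⟩
      have hch : ((k+1).choose (m+1) : ℚ) = (k.choose (m+1) : ℚ) + (k.choose m : ℚ) := by
        rw [Nat.choose_succ_succ']; push_cast; ring
      have hmul : ((k:ℚ)+1) * (k.choose m : ℚ) = ((k+1).choose (m+1) : ℚ) * ((m:ℚ)+1) := by
        have h := Nat.add_one_mul_choose_eq k m
        have h2 : ((Nat.succ k * k.choose m : ℕ) : ℚ)
            = (((k+1).choose (m+1) * (m+1) : ℕ) : ℚ) := by rw [h]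
        push_cast at h2
        linarith
      have hm1 : ((m:ℚ)+1) ≠ 0 := by positivity
      have hk1 : ((k:ℚ)+1) ≠ 0 := by positivity
      have key : ((k+1).choose (m+1) : ℚ) / ((m:ℚ)+1)
          = (k.choose (m+1) : ℚ) / ((m:ℚ)+1) + ((k+1).choose (m+1) : ℚ) / ((k:ℚ)+1) := by
        rw [hch]
        field_simp
        rw [hch] at hmul
        linear_combination hmul
      push_cast
      rw [mul_div_assoc, mul_div_assoc, mul_div_assoc, key]
      ring
    have hfirst : ∑ m ∈ Icc 1 (k+1), (-1 : ℚ) ^ m * (k.choose m : ℚ) / m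
        = ∑ m ∈ Icc 1 k, (-1 : ℚ) ^ m * (k.choose m : ℚ) / m := by
      rw [Finset.sum_Icc_succ_top (by omega)]
      simp [Nat.choose_succ_self]
    have hsecond : ∑ m ∈ Icc 1 (k+1), (-1 : ℚ) ^ m * ((k+1).choose m : ℚ) / ((k:ℚ)+1)
        = -1 / ((k:ℚ)+1) := by
      rw [← Finset.sum_div]
      rw [show ∑ m ∈ Icc 1 (k+1), (-1:ℚ)^m * ((k+1).choose m : ℚ) = -1 from
        altsum (k+1) (by omega)]
    rw [Finset.sum_congr rfl pascal, Finset.sum_add_distrib, hfirst, ih, hsecond,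
      Finset.sum_Icc_succ_top (show 1 ≤ k+1 by omega)]
    push_cast
    ring

theorem stmt11 (k₁ k₂ : ℕ) (hk₁ : 1 ≤ k₁) (hk₂ : 1 ≤ k₂) :
    (∑ j ∈ Finset.Icc 1 k₂, (1 : ℚ) / (j : ℚ))
        * ∑ m ∈ Finset.Icc 1 k₁, (-1 : ℚ) ^ ((2 : ℤ) - (m : ℤ)) * (k₁.choose m : ℚ)
      + (∑ j ∈ Finset.Icc 1 k₁, (1 : ℚ) / (j : ℚ))
          * ∑ l ∈ Finset.Icc 1 k₂, (-1 : ℚ) ^ ((2 : ℤ) - (l : ℤ)) * (k₂.choose l : ℚ)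
      + ∑ l ∈ Finset.Icc 1 k₂, ∑ m ∈ Finset.Icc 1 k₁,
          (-1 : ℚ) ^ ((2 : ℤ) - (l : ℤ) - (m : ℤ))
            * (k₂.choose l : ℚ) * (k₁.choose m : ℚ) * (1 / (l : ℚ) + 1 / (m : ℚ)) = 0 := by
  have e1 : ∀ n : ℕ, (-1 : ℚ) ^ ((2 : ℤ) - (n : ℤ)) = (-1 : ℚ) ^ n := by
    intro n
    rw [zpow_sub₀ (by norm_num : (-1:ℚ) ≠ 0), zpow_natCast, div_eq_mul_inv,
      ← inv_pow, inv_neg, inv_one]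
    norm_num
  have e2 : ∀ l m : ℕ, (-1 : ℚ) ^ ((2 : ℤ) - (l : ℤ) - (m : ℤ))
      = (-1 : ℚ) ^ l * (-1:ℚ) ^ m := by
    intro l m
    rw [zpow_sub₀ (by norm_num : (-1:ℚ) ≠ 0), e1 l, zpow_natCast, div_eq_mul_inv,
      ← inv_pow, inv_neg, inv_one]
  simp only [e1, e2]
  have A1 := altsum k₁ hk₁
  have A2 := altsum k₂ hk₂
  have B1 := altsum_div k₁ hk₁
  have B2 := altsum_div k₂ hk₂
  have hdouble : ∑ l ∈ Finset.Icc 1 k₂, ∑ m ∈ Finset.Icc 1 k₁,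
      (-1:ℚ)^l * (-1:ℚ)^m * (k₂.choose l : ℚ) * (k₁.choose m : ℚ) * (1/(l:ℚ) + 1/(m:ℚ))
      = (∑ l ∈ Icc 1 k₂, (-1:ℚ)^l * (k₂.choose l : ℚ) / l)
          * (∑ m ∈ Icc 1 k₁, (-1:ℚ)^m * (k₁.choose m : ℚ))
        + (∑ l ∈ Icc 1 k₂, (-1:ℚ)^l * (k₂.choose l : ℚ))
          * (∑ m ∈ Icc 1 k₁, (-1:ℚ)^m * (k₁.choose m : ℚ) / m) := by
    rw [Finset.sum_mul_sum, Finset.sum_mul_sum, ← Finset.sum_add_distrib]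
    refine Finset.sum_congr rfl fun l _ => ?_
    rw [← Finset.sum_add_distrib]
    refine Finset.sum_congr rfl fun m _ => ?_
    ring
  rw [hdouble, A1, A2, B1, B2]
  ring
end

section
/- For integers k₁, k₂ ≥ 1 and q with 3 ≤ q ≤ min(k₁,k₂), the q-th order coefficient of the unequal-truncation Hessian operator vanishes: c_0^{k₂} ∑_{m=1}^{k₁} (-1)^{2-m} C(k₁,m) m^{q-1} + c_0^{k₁} ∑_{l=1}^{k₂} (-1)^{2-l} C(k₂,l) l^{q-1} + ∑_{l=1}^{k₂} ∑_{m=1}^{k₁} (-1)^{2-l-m} C(k₂,l) C(k₁,m) (l+m)^q/(l·m) = 0, where c_0^k = ∑_{j=1}^k 1/j. -/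
open Finset

lemma keyA : ∀ (k : ℕ), ∀ j < k, ∑ m ∈ range (k+1), (-1:ℚ)^m * (k.choose m) * (m:ℚ)^j = 0 := by
  intro k
  induction k with
  | zero => intro j hj; omega
  | succ k IH =>
    intro j hj
    rcases Nat.eq_zero_or_pos j with rfl | hj1
    · have := Int.alternating_sum_range_choose_of_ne (n := k+1) (by omega)
      have h2 : ((∑ i ∈ range (k + 2), (-1 : ℤ) ^ i * ((k+1).choose i : ℤ) : ℤ) : ℚ) = 0 := by
        rw [this]; norm_num
      push_cast at h2
      simpa using h2
    · rw [Finset.sum_range_succ']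
      have h0 : (-1:ℚ)^0 * ((k+1).choose 0 : ℚ) * ((0:ℕ):ℚ)^j = 0 := by
        norm_num [zero_pow (by omega : j ≠ 0)]
      rw [h0, add_zero]
      have hterm : ∀ i ∈ range (k+1), (-1:ℚ)^(i+1) * ((k+1).choose (i+1) : ℚ) * ((i+1:ℕ):ℚ)^j
          = -((k+1 : ℚ)) * ((-1:ℚ)^i * (k.choose i : ℚ) * ((i:ℚ)+1)^(j-1)) := by
        intro i _
        have hc : ((k+1) * k.choose i : ℕ) = ((k + 1).choose (i + 1) * (i + 1) : ℕ) :=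
          Nat.add_one_mul_choose_eq k i
        have hc' : ((k:ℚ)+1) * (k.choose i : ℚ) = ((k + 1).choose (i + 1) : ℚ) * ((i:ℚ) + 1) := by
          exact_mod_cast congrArg (Nat.cast : ℕ → ℚ) hc
        have hi : ((i+1:ℕ):ℚ)^j = ((i:ℚ)+1)^(j-1) * ((i:ℚ)+1) := by
          push_cast
          rw [← pow_succ]
          congr 1
          omega
        rw [hi, pow_succ]
        calc (-1:ℚ)^i * (-1) * ((k+1).choose (i+1) : ℚ) * (((i:ℚ)+1)^(j-1) * ((i:ℚ)+1))
            = -((-1:ℚ)^i * (((k + 1).choose (i + 1) : ℚ) * ((i:ℚ) + 1)) * ((i:ℚ)+1)^(j-1)) := by ring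
          _ = -((k+1 : ℚ)) * ((-1:ℚ)^i * (k.choose i : ℚ) * ((i:ℚ)+1)^(j-1)) := by
              rw [← hc']; ring
      rw [Finset.sum_congr rfl hterm, ← Finset.mul_sum]
      have : ∑ i ∈ range (k+1), (-1:ℚ)^i * (k.choose i : ℚ) * ((i:ℚ)+1)^(j-1) = 0 := by
        have hexp : ∀ i ∈ range (k+1), (-1:ℚ)^i * (k.choose i : ℚ) * ((i:ℚ)+1)^(j-1)
            = ∑ t ∈ range j, ((j-1).choose t : ℚ) * ((-1:ℚ)^i * (k.choose i : ℚ) * (i:ℚ)^t) := by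
          intro i _
          rw [add_pow]
          rw [Finset.mul_sum]
          have hj' : j - 1 + 1 = j := by omega
          rw [hj']
          refine Finset.sum_congr rfl fun t _ => ?_
          rw [one_pow]; ring
        rw [Finset.sum_congr rfl hexp, Finset.sum_comm]
        refine Finset.sum_eq_zero fun t ht => ?_
        rw [← Finset.mul_sum, IH t (by simp at ht; omega), mul_zero]
      rw [this, mul_zero]

lemma keyB (k j : ℕ) (h1 : 1 ≤ j) (hj : j < k) :
    ∑ m ∈ Icc 1 k, (-1:ℚ)^m * (k.choose m) * (m:ℚ)^j = 0 := by
  rw [← keyA k j hj]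
  refine Finset.sum_subset ?_ ?_
  · intro x hx
    simp only [mem_Icc] at hx
    simp only [mem_range]
    omega
  · intro x hx hx'
    simp only [mem_range, mem_Icc] at hx hx'
    have : x = 0 := by omega
    subst this
    simp [zero_pow (by omega : j ≠ 0)]

lemma zsign (n : ℕ) : (-1:ℚ) ^ ((2:ℤ) - (n:ℤ)) = (-1:ℚ)^n := by
  rw [zpow_sub₀ (by norm_num : (-1:ℚ) ≠ 0)]
  norm_num
  rcases Nat.even_or_odd n with h | h <;> rw [h.neg_one_pow] <;> norm_num

lemma zsign2 (l m : ℕ) : (-1:ℚ) ^ ((2:ℤ) - (l:ℤ) - (m:ℤ)) = (-1:ℚ)^l * (-1:ℚ)^m := by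
  rw [zpow_sub₀ (by norm_num : (-1:ℚ) ≠ 0), zsign l, zpow_natCast]
  rcases Nat.even_or_odd m with h | h <;> rw [h.neg_one_pow] <;>
    field_simp

theorem stmt13 (k₁ k₂ q : ℕ) (hk₁ : 1 ≤ k₁) (hk₂ : 1 ≤ k₂)
    (hq : 3 ≤ q) (hqk : q ≤ min k₁ k₂) :
    (∑ j ∈ Finset.Icc 1 k₂, (1 : ℚ) / (j : ℚ))
        * ∑ m ∈ Finset.Icc 1 k₁,
            (-1 : ℚ) ^ ((2 : ℤ) - (m : ℤ)) * (k₁.choose m : ℚ) * (m : ℚ) ^ (q - 1)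
      + (∑ j ∈ Finset.Icc 1 k₁, (1 : ℚ) / (j : ℚ))
          * ∑ l ∈ Finset.Icc 1 k₂,
              (-1 : ℚ) ^ ((2 : ℤ) - (l : ℤ)) * (k₂.choose l : ℚ) * (l : ℚ) ^ (q - 1)
      + ∑ l ∈ Finset.Icc 1 k₂, ∑ m ∈ Finset.Icc 1 k₁,
          (-1 : ℚ) ^ ((2 : ℤ) - (l : ℤ) - (m : ℤ))
            * (k₂.choose l : ℚ) * (k₁.choose m : ℚ)
            * ((l : ℚ) + (m : ℚ)) ^ q / ((l : ℚ) * (m : ℚ)) = 0 := by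
  have hq1 : q ≤ k₁ := le_trans hqk (min_le_left _ _)
  have hq2 : q ≤ k₂ := le_trans hqk (min_le_right _ _)
  -- first sum vanishes
  have e1 : ∑ m ∈ Finset.Icc 1 k₁,
      (-1 : ℚ) ^ ((2 : ℤ) - (m : ℤ)) * (k₁.choose m : ℚ) * (m : ℚ) ^ (q - 1) = 0 := by
    rw [Finset.sum_congr rfl (fun m _ => by rw [zsign m])]
    exact keyB k₁ (q-1) (by omega) (by omega)
  have e2 : ∑ l ∈ Finset.Icc 1 k₂,
      (-1 : ℚ) ^ ((2 : ℤ) - (l : ℤ)) * (k₂.choose l : ℚ) * (l : ℚ) ^ (q - 1) = 0 := by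
    rw [Finset.sum_congr rfl (fun l _ => by rw [zsign l])]
    exact keyB k₂ (q-1) (by omega) (by omega)
  rw [e1, e2, mul_zero, mul_zero, zero_add, zero_add]
  -- double sum
  have e3 : ∀ l ∈ Finset.Icc 1 k₂, ∀ m ∈ Finset.Icc 1 k₁,
      (-1 : ℚ) ^ ((2 : ℤ) - (l : ℤ) - (m : ℤ))
            * (k₂.choose l : ℚ) * (k₁.choose m : ℚ)
            * ((l : ℚ) + (m : ℚ)) ^ q / ((l : ℚ) * (m : ℚ))
      = ∑ i ∈ range (q+1), (q.choose i : ℚ) *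
          (((-1:ℚ)^l * (k₂.choose l : ℚ) * (l:ℚ)^i / (l:ℚ)) *
           ((-1:ℚ)^m * (k₁.choose m : ℚ) * (m:ℚ)^(q-i) / (m:ℚ))) := by
    intro l hl m hm
    simp only [mem_Icc] at hl hm
    have hl0 : (l:ℚ) ≠ 0 := by exact_mod_cast (by omega : l ≠ 0)
    have hm0 : (m:ℚ) ≠ 0 := by exact_mod_cast (by omega : m ≠ 0)
    rw [zsign2, add_pow]
    rw [Finset.mul_sum, Finset.sum_div]
    refine Finset.sum_congr rfl fun i _ => ?_
    field_simp
  rw [Finset.sum_congr rfl (fun l hl => Finset.sum_congr rfl (e3 l hl))]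
  rw [Finset.sum_congr rfl (fun l _ => Finset.sum_comm), Finset.sum_comm]
  refine Finset.sum_eq_zero fun i hi => ?_
  simp only [← Finset.mul_sum]
  rw [← Finset.sum_mul]
  rcases le_or_gt i (q-2) with hc | hc
  · -- m-sum vanishes
    have : ∑ m ∈ Icc 1 k₁, (-1:ℚ)^m * (k₁.choose m : ℚ) * (m:ℚ)^(q-i) / (m:ℚ)
        = ∑ m ∈ Icc 1 k₁, (-1:ℚ)^m * (k₁.choose m : ℚ) * (m:ℚ)^(q-i-1) := by
      refine Finset.sum_congr rfl fun m hm => ?_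
      simp only [mem_Icc] at hm
      have hm0 : (m:ℚ) ≠ 0 := by exact_mod_cast (by omega : m ≠ 0)
      rw [mul_div_assoc]
      congr 1
      rw [div_eq_iff hm0, ← pow_succ]
      congr 1
      omega
    rw [this, keyB k₁ (q-i-1) (by omega) (by omega)]
    simp
  · -- l-sum vanishes
    have hiq : i ≤ q := by simpa using Nat.lt_succ_iff.mp (mem_range.mp hi)
    have : ∑ l ∈ Icc 1 k₂, (-1:ℚ)^l * (k₂.choose l : ℚ) * (l:ℚ)^i / (l:ℚ)
        = ∑ l ∈ Icc 1 k₂, (-1:ℚ)^l * (k₂.choose l : ℚ) * (l:ℚ)^(i-1) := by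
      refine Finset.sum_congr rfl fun l hl => ?_
      simp only [mem_Icc] at hl
      have hl0 : (l:ℚ) ≠ 0 := by exact_mod_cast (by omega : l ≠ 0)
      rw [mul_div_assoc]
      congr 1
      rw [div_eq_iff hl0, ← pow_succ]
      congr 1
      omega
    rw [this, keyB k₂ (i-1) (by omega) (by omega)]
    simp
end
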